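/- Let N ≥ 1 be an integer and let a > 0, n > 0 be real numbers. Then n ∫₀^∞ x^{n−1} · (1/(N−1)!) · (∫_{√(x/a)}^∞ u^{N−1} e^{−u} du) dx = 2n aⁿ ∑_{m=0}^{N−1} Γ(2n + m)/m!, where Γ is the Gamma function. -/

import Mathlib

open MeasureTheory Set Real Filter

lemma sum_exp_deriv (K : ℕ) (u : ℝ) :
    HasDerivAt (fun u : ℝ => Real.exp (-u) * ∑ m ∈ Finset.range (K+1), u ^ m / m.factorial)
      (-(Real.exp (-u) * u ^ K / K.factorial)) u := by
  have hexp : HasDerivAt (fun u : ℝ => Real.exp (-u)) (-Real.exp (-u)) u := by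
    simpa using (hasDerivAt_neg u).exp
  have hsum : HasDerivAt (fun u : ℝ => ∑ m ∈ Finset.range (K+1), u ^ m / m.factorial)
      (∑ m ∈ Finset.range (K+1), (m * u ^ (m-1)) / m.factorial) u := by
    apply HasDerivAt.fun_sum
    intro m _
    exact (hasDerivAt_pow m u).div_const _
  have hs : (∑ m ∈ Finset.range (K+1), ((m:ℝ) * u ^ (m-1)) / m.factorial)
      = ∑ m ∈ Finset.range K, u ^ m / m.factorial := by
    rw [Finset.sum_range_succ']
    simp only [Nat.cast_add, Nat.cast_one, Nat.add_sub_cancel, Nat.cast_zero, Nat.factorial_zero,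
      Nat.cast_one, pow_zero, zero_mul, zero_div, add_zero]
    refine Finset.sum_congr rfl fun m _ => ?_
    rw [Nat.factorial_succ]
    push_cast
    have h1 : ((m:ℝ)+1) ≠ 0 := by positivity
    have h2 : (m.factorial : ℝ) ≠ 0 := by positivity
    field_simp
  rw [hs] at hsum
  have := hexp.fun_mul hsum
  refine this.congr_deriv ?_
  have hK : (∑ m ∈ Finset.range (K+1), u ^ m / m.factorial)
      = (∑ m ∈ Finset.range K, u ^ m / m.factorial) + u ^ K / K.factorial := by
    rw [Finset.sum_range_succ]
  rw [hK]
  ring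

lemma inner_eval (K : ℕ) {t : ℝ} (ht : 0 ≤ t) :
    ∫ u in Set.Ioi t, u ^ K * Real.exp (-u)
      = K.factorial * (Real.exp (-t) * ∑ m ∈ Finset.range (K+1), t ^ m / m.factorial) := by
  set g : ℝ → ℝ := fun u => -((K.factorial : ℝ) *
    (Real.exp (-u) * ∑ m ∈ Finset.range (K+1), u ^ m / m.factorial)) with hg
  have hfac : (K.factorial : ℝ) ≠ 0 := by positivity
  have hderiv : ∀ x ∈ Set.Ioi t, HasDerivAt g (x ^ K * Real.exp (-x)) x := by
    intro x _
    have := ((sum_exp_deriv K x).const_mul (K.factorial : ℝ)).neg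
    refine this.congr_deriv ?_
    field_simp
  have hcont : ContinuousWithinAt g (Set.Ici t) t := by
    apply Continuous.continuousWithinAt
    have : Continuous fun u : ℝ => ∑ m ∈ Finset.range (K+1), u ^ m / m.factorial :=
      continuous_finset_sum _ fun m _ => (continuous_pow m).div_const _
    exact (continuous_const.mul ((Real.continuous_exp.comp continuous_neg).mul this)).neg
  have hpos : ∀ x ∈ Set.Ioi t, 0 ≤ x ^ K * Real.exp (-x) := by
    intro x hx
    have hx0 : 0 < x := lt_of_le_of_lt ht hx
    positivity
  have htend : Tendsto g atTop (nhds 0) := by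
    have h1 : Tendsto (fun u : ℝ => Real.exp (-u) * ∑ m ∈ Finset.range (K+1), u ^ m / m.factorial)
        atTop (nhds 0) := by
      have heq : (fun u : ℝ => Real.exp (-u) * ∑ m ∈ Finset.range (K+1), u ^ m / m.factorial)
          = fun u => ∑ m ∈ Finset.range (K+1), (u ^ m * Real.exp (-u)) * (m.factorial : ℝ)⁻¹ := by
        funext u
        rw [Finset.mul_sum]
        exact Finset.sum_congr rfl fun m _ => by ring
      rw [heq]
      have : Tendsto (fun u : ℝ => ∑ m ∈ Finset.range (K+1),
          (u ^ m * Real.exp (-u)) * (m.factorial : ℝ)⁻¹) atTop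
          (nhds (∑ m ∈ Finset.range (K+1), (0:ℝ) * (m.factorial : ℝ)⁻¹)) := by
        apply tendsto_finset_sum
        intro m _
        exact (tendsto_pow_mul_exp_neg_atTop_nhds_zero m).mul_const _
      simpa using this
    have := (h1.const_mul (K.factorial : ℝ)).neg
    simpa using this
  have := integral_Ioi_of_hasDerivAt_of_nonneg hcont hderiv hpos htend
  rw [this, hg]
  ring

theorem moment_gamma_us (N : ℕ) (hN : 1 ≤ N) (a n : ℝ) (ha : 0 < a) (hn : 0 < n) :
    n * ∫ x in Set.Ioi (0:ℝ), x ^ (n - 1) *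
        ((1 / ((N - 1).factorial : ℝ)) *
          ∫ u in Set.Ioi (Real.sqrt (x / a)), u ^ (N - 1) * Real.exp (-u)) =
    2 * n * a ^ n * ∑ m ∈ Finset.range N, Real.Gamma (2 * n + m) / (m.factorial : ℝ) := by
  obtain ⟨K, rfl⟩ := Nat.exists_eq_add_of_le hN
  have hN1 : 1 + K - 1 = K := by omega
  rw [hN1, add_comm 1 K]
  have hfac : ∀ m : ℕ, ((m.factorial : ℝ)) ≠ 0 := fun m => by positivity
  -- Step 1: evaluate inner integral
  set F : ℝ → ℝ := fun y => (a * y) ^ (n-1) *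
    (Real.exp (-Real.sqrt y) * ∑ m ∈ Finset.range (K+1), (Real.sqrt y) ^ m / m.factorial)
    with hF
  have h1 : ∫ x in Set.Ioi (0:ℝ), x ^ (n - 1) *
        ((1 / ((K.factorial : ℝ))) *
          ∫ u in Set.Ioi (Real.sqrt (x / a)), u ^ K * Real.exp (-u))
      = ∫ x in Set.Ioi (0:ℝ), F (x * a⁻¹) := by
    apply setIntegral_congr_fun measurableSet_Ioi
    intro x hx
    dsimp only
    rw [inner_eval K (Real.sqrt_nonneg (x/a))]
    have hax : a * (x * a⁻¹) = x := by field_simp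
    have : x * a⁻¹ = x / a := by rw [div_eq_mul_inv]
    rw [hF]
    simp only [this]
    rw [one_div, inv_mul_cancel_left₀ (hfac K), show a * (x/a) = x by field_simp]
  rw [h1, integral_comp_mul_right_Ioi F 0 (inv_pos.mpr ha)]
  simp only [zero_mul, inv_inv, smul_eq_mul]
  -- Step 2: substitution y = u^2
  have h2 : (∫ x in Set.Ioi (0:ℝ), (|(2:ℝ)| * x ^ ((2:ℝ) - 1)) • F (x ^ (2:ℝ)))
      = ∫ y in Set.Ioi (0:ℝ), F y := integral_comp_rpow_Ioi F two_ne_zero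
  rw [← h2]
  -- Step 3: simplify the integrand
  have h3 : ∫ x in Set.Ioi (0:ℝ), (|(2:ℝ)| * x ^ ((2:ℝ) - 1)) • F (x ^ (2:ℝ))
      = ∫ u in Set.Ioi (0:ℝ), ∑ m ∈ Finset.range (K+1),
          (2 * a ^ (n-1) * (m.factorial : ℝ)⁻¹) * (Real.exp (-u) * u ^ (2*n + (m:ℝ) - 1)) := by
    apply setIntegral_congr_fun measurableSet_Ioi
    intro u hu
    dsimp only
    have hu0 : (0:ℝ) < u := hu
    have hsq : u ^ (2:ℝ) = u ^ (2:ℕ) := by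
      rw [← Real.rpow_natCast u 2]; norm_num
    have hsqrt : Real.sqrt (u ^ (2:ℕ)) = u := Real.sqrt_sq hu0.le
    rw [smul_eq_mul, show ((2:ℝ)-1) = 1 by norm_num, Real.rpow_one, hF]
    simp only [hsq, hsqrt]
    rw [Real.mul_rpow ha.le (by positivity), abs_of_nonneg (by norm_num : (0:ℝ) ≤ 2)]
    have hup : (u ^ (2:ℕ) : ℝ) ^ (n-1) = u ^ (2*(n-1)) := by
      rw [← Real.rpow_natCast u 2, ← Real.rpow_mul hu0.le]
      norm_num
    rw [hup]
    simp only [Finset.mul_sum]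
    refine Finset.sum_congr rfl fun m _ => ?_
    have hpow : u ^ (2*n + (m:ℝ) - 1) = u ^ (2*(n-1)) * u * u ^ (m:ℕ) := by
      rw [show 2*n + (m:ℝ) - 1 = (2*(n-1) + 1) + (m:ℝ) by ring, Real.rpow_add hu0,
        Real.rpow_add hu0, Real.rpow_one, Real.rpow_natCast]
    rw [hpow]
    field_simp
  rw [h3]
  -- Step 4: exchange sum and integral, identify Gamma values
  have hint : ∀ m ∈ Finset.range (K+1), IntegrableOn
      (fun u : ℝ => (2 * a ^ (n-1) * (m.factorial : ℝ)⁻¹) * (Real.exp (-u) * u ^ (2*n + (m:ℝ) - 1)))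
      (Set.Ioi (0:ℝ)) := by
    intro m _
    have hs : (0:ℝ) < 2*n + m := by positivity
    have := (Real.GammaIntegral_convergent hs).const_mul (2 * a ^ (n-1) * (m.factorial : ℝ)⁻¹)
    simpa [IntegrableOn] using this
  rw [integral_finset_sum _ hint]
  have h4 : ∀ m ∈ Finset.range (K+1),
      (∫ u in Set.Ioi (0:ℝ),
        (2 * a ^ (n-1) * (m.factorial : ℝ)⁻¹) * (Real.exp (-u) * u ^ (2*n + (m:ℝ) - 1)))
      = (2 * a ^ (n-1) * (m.factorial : ℝ)⁻¹) * Real.Gamma (2*n + m) := by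
    intro m _
    rw [integral_const_mul]
    congr 1
    rw [Real.Gamma_eq_integral (by positivity : (0:ℝ) < 2*n + m)]
  rw [Finset.sum_congr rfl h4]
  -- Final algebra
  have han : a * a ^ (n-1) = a ^ n := by
    nth_rewrite 1 [← Real.rpow_one a]
    rw [← Real.rpow_add ha]
    congr 1
    ring
  rw [Finset.mul_sum, Finset.mul_sum, Finset.mul_sum]
  refine Finset.sum_congr rfl fun m _ => ?_
  rw [← han]
  field_simp
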